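/- For p > 1, d ∈ (-1,1), α = 2/(p-1), and x ∈ (0, 1/|d|) (any x > 0 if d = 0), the bound ∫_{-1}^{1} Y²(1-Y²)^{α}/(1 - x²d²Y²) dY ≤ (4/((3p+1)(1-x²d²))) ∫_{-1}^{1} Y²(1-Y²)^{α-1} dY holds. -/

import Mathlib

open MeasureTheory intervalIntegral Set

theorem integral_with_denominator_bound (p : ℝ) (hp : 1 < p) (d x : ℝ)
    (hd : d ∈ Set.Ioo (-1 : ℝ) 1) (hx : 0 < x) (hxd : x * |d| < 1) :
    (∫ Y in (-1 : ℝ)..1, Y ^ 2 * (1 - Y ^ 2) ^ (2 / (p - 1)) / (1 - x ^ 2 * d ^ 2 * Y ^ 2))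
      ≤ (4 / ((3 * p + 1) * (1 - x ^ 2 * d ^ 2)))
        * ∫ Y in (-1 : ℝ)..1, Y ^ 2 * (1 - Y ^ 2) ^ (2 / (p - 1) - 1) := by
  have hp1 : (0:ℝ) < p - 1 := by linarith
  set α : ℝ := 2 / (p - 1) with hαdef
  have hα : 0 < α := by positivity
  have hα1 : -1 < α - 1 := by linarith
  -- denominator bound
  have hxd2 : x ^ 2 * d ^ 2 < 1 := by
    have h1 : (x * |d|) ^ 2 < 1 := by
      nlinarith [mul_nonneg hx.le (abs_nonneg d)]
    calc x ^ 2 * d ^ 2 = (x * |d|) ^ 2 := by rw [mul_pow, sq_abs]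
    _ < 1 := h1
  have hD : 0 < 1 - x ^ 2 * d ^ 2 := by linarith
  have hxd0 : 0 ≤ x ^ 2 * d ^ 2 := by positivity
  -- continuity of (1 - Y^2)^α
  have hcont_rpow : Continuous (fun Y : ℝ => (1 - Y ^ 2) ^ α) := by
    rw [continuous_iff_continuousAt]
    intro Y
    exact (continuousAt_const.sub (continuous_pow 2).continuousAt).rpow_const (Or.inr hα.le)
  have hcontf : Continuous (fun Y : ℝ => Y ^ 2 * (1 - Y ^ 2) ^ α) :=
    (continuous_pow 2).mul hcont_rpow
  -- integrability of f = Y^2 (1-Y^2)^α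
  have hint_f : IntervalIntegrable (fun Y : ℝ => Y ^ 2 * (1 - Y ^ 2) ^ α) volume (-1) 1 :=
    hcontf.intervalIntegrable _ _
  -- integrability of f₁ = Y^2 (1-Y^2)^(α-1) on [0,1]
  have hmeas : Measurable (fun Y : ℝ => Y ^ 2 * (1 - Y ^ 2) ^ (α - 1)) := by fun_prop
  set C : ℝ := max 1 (2 ^ (α - 1)) with hC
  have hC1 : (1:ℝ) ≤ C := le_max_left _ _
  have h01 : IntervalIntegrable (fun Y : ℝ => Y ^ 2 * (1 - Y ^ 2) ^ (α - 1)) volume 0 1 := by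
    have hbase : IntervalIntegrable (fun Y : ℝ => C * (1 - Y) ^ (α - 1)) volume 0 1 := by
      have h := (intervalIntegrable_rpow' (a := 0) (b := 1) hα1).comp_sub_left 1
      simpa using (h.symm.const_mul C)
    refine hbase.mono_fun (hmeas.aestronglyMeasurable) ?_
    have h1 : ∀ᵐ Y ∂volume.restrict (Set.uIoc (0:ℝ) 1), Y ∈ Set.uIoc (0:ℝ) 1 :=
      ae_restrict_mem measurableSet_uIoc
    have h2 : ∀ᵐ Y ∂volume.restrict (Set.uIoc (0:ℝ) 1), Y ≠ 1 := by
      refine (ae_restrict_iff' measurableSet_uIoc).2 ?_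
      filter_upwards [(ae_iff.2 (by simp : volume {Y : ℝ | ¬ Y ≠ 1} = 0))] with Y hY _
      exact hY
    filter_upwards [h1, h2] with Y hY hY1
    rw [uIoc_of_le (by norm_num : (0:ℝ) ≤ 1)] at hY
    obtain ⟨hY0, hYle⟩ := hY
    have hYlt : Y < 1 := lt_of_le_of_ne hYle hY1
    have h1Y : 0 < 1 - Y := by linarith
    have h1Y2 : 0 < 1 - Y ^ 2 := by nlinarith
    have hsplit : (1 - Y ^ 2) ^ (α - 1) = (1 - Y) ^ (α - 1) * (1 + Y) ^ (α - 1) := by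
      rw [← Real.mul_rpow h1Y.le (by linarith)]
      ring_nf
    have hfac : (1 + Y) ^ (α - 1) ≤ C := by
      rcases le_or_gt α 1 with h | h
      · exact le_trans (Real.rpow_le_one_of_one_le_of_nonpos (by linarith) (by linarith))
          hC1
      · exact le_trans (Real.rpow_le_rpow (by linarith) (by linarith) (by linarith))
          (le_max_right _ _)
    have hnn : 0 ≤ (1 - Y) ^ (α - 1) := Real.rpow_nonneg h1Y.le _
    have hnn2 : 0 ≤ (1 - Y ^ 2) ^ (α - 1) := Real.rpow_nonneg h1Y2.le _
    rw [Real.norm_eq_abs, Real.norm_eq_abs, abs_of_nonneg (by positivity),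
      abs_of_nonneg (by positivity)]
    calc Y ^ 2 * (1 - Y ^ 2) ^ (α - 1) ≤ 1 * (1 - Y ^ 2) ^ (α - 1) := by
          apply mul_le_mul_of_nonneg_right _ hnn2
          nlinarith
      _ = (1 - Y) ^ (α - 1) * (1 + Y) ^ (α - 1) := by rw [one_mul, hsplit]
      _ ≤ (1 - Y) ^ (α - 1) * C := mul_le_mul_of_nonneg_left hfac hnn
      _ = C * (1 - Y) ^ (α - 1) := by ring
  -- on [-1, 0] by symmetry
  have hm0 : IntervalIntegrable (fun Y : ℝ => Y ^ 2 * (1 - Y ^ 2) ^ (α - 1)) volume (-1) 0 := by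
    have heq : (fun Y : ℝ => (-Y) ^ 2 * (1 - (-Y) ^ 2) ^ (α - 1))
        = fun Y : ℝ => Y ^ 2 * (1 - Y ^ 2) ^ (α - 1) := by
      funext Y; rw [neg_pow, pow_two, pow_two]; ring_nf
    have h' := (IntervalIntegrable.iff_comp_neg (f := fun Y : ℝ => Y ^ 2 * (1 - Y ^ 2) ^ (α - 1))
      (a := 0) (b := 1)).mp h01
    rw [heq] at h'
    simpa using h'.symm
  have hint_f1 : IntervalIntegrable (fun Y : ℝ => Y ^ 2 * (1 - Y ^ 2) ^ (α - 1))
      volume (-1) 1 := hm0.trans h01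
  -- FTC identity: ∫ f = (2α/(2α+3)) ∫ f₁
  have hc3 : (0:ℝ) < 2 * α + 3 := by linarith
  have hFTC : (∫ Y in (-1:ℝ)..1,
      (2 * α / (2 * α + 3) * (Y ^ 2 * (1 - Y ^ 2) ^ (α - 1)) - Y ^ 2 * (1 - Y ^ 2) ^ α)) = 0 := by
    have hder : ∀ Y ∈ Ioo (-1:ℝ) 1,
        HasDerivAt (fun Y : ℝ => -(Y ^ 3) * (1 - Y ^ 2) ^ α / (2 * α + 3))
          (2 * α / (2 * α + 3) * (Y ^ 2 * (1 - Y ^ 2) ^ (α - 1)) - Y ^ 2 * (1 - Y ^ 2) ^ α) Y := by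
      intro Y hY
      have h1Y2 : 0 < 1 - Y ^ 2 := by nlinarith [hY.1, hY.2]
      have h1 : HasDerivAt (fun Y : ℝ => 1 - Y ^ 2) (-(2 * Y)) Y := by
        simpa using (hasDerivAt_const Y (1:ℝ)).fun_sub (hasDerivAt_pow 2 Y)
      have h2 := h1.rpow_const (p := α) (Or.inl h1Y2.ne')
      have h3 : HasDerivAt (fun Y : ℝ => -(Y ^ 3)) (-(3 * Y ^ 2)) Y := by
        simpa using (hasDerivAt_pow 3 Y).fun_neg
      have h4 := (h3.fun_mul h2).div_const (2 * α + 3)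
      refine h4.congr_deriv ?_
      have hsub : (1 - Y ^ 2) ^ α = (1 - Y ^ 2) ^ (α - 1) * (1 - Y ^ 2) := by
        nth_rewrite 1 [show α = α - 1 + 1 by ring]
        rw [Real.rpow_add_one h1Y2.ne']
      rw [hsub]
      field_simp
      ring
    have hcontF : ContinuousOn (fun Y : ℝ => -(Y ^ 3) * (1 - Y ^ 2) ^ α / (2 * α + 3))
        (Icc (-1) 1) :=
      (((continuous_pow 3).neg.mul hcont_rpow).div_const _).continuousOn
    have hint : IntervalIntegrable (fun Y : ℝ =>
        2 * α / (2 * α + 3) * (Y ^ 2 * (1 - Y ^ 2) ^ (α - 1)) - Y ^ 2 * (1 - Y ^ 2) ^ α)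
        volume (-1) 1 := (hint_f1.const_mul _).sub hint_f
    rw [integral_eq_sub_of_hasDerivAt_of_le (by norm_num) hcontF hder hint]
    norm_num [Real.zero_rpow hα.ne']
  have hkey : (∫ Y in (-1:ℝ)..1, Y ^ 2 * (1 - Y ^ 2) ^ α)
      = 2 * α / (2 * α + 3) * ∫ Y in (-1:ℝ)..1, Y ^ 2 * (1 - Y ^ 2) ^ (α - 1) := by
    have := hFTC
    rw [integral_sub (hint_f1.const_mul _) hint_f, intervalIntegral.integral_const_mul] at this
    linarith
  -- pointwise bound on the LHS
  have hptwise : ∀ Y ∈ Icc (-1:ℝ) 1,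
      Y ^ 2 * (1 - Y ^ 2) ^ α / (1 - x ^ 2 * d ^ 2 * Y ^ 2)
        ≤ (1 / (1 - x ^ 2 * d ^ 2)) * (Y ^ 2 * (1 - Y ^ 2) ^ α) := by
    intro Y hY
    have hY2 : Y ^ 2 ≤ 1 := by nlinarith [hY.1, hY.2]
    have hden : 1 - x ^ 2 * d ^ 2 ≤ 1 - x ^ 2 * d ^ 2 * Y ^ 2 := by nlinarith
    have hN : 0 ≤ Y ^ 2 * (1 - Y ^ 2) ^ α :=
      mul_nonneg (sq_nonneg Y) (Real.rpow_nonneg (by linarith) _)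
    rw [one_div, inv_mul_eq_div]
    exact div_le_div_of_nonneg_left hN hD hden
  -- integrability of LHS integrand
  have hintLHS : IntervalIntegrable
      (fun Y : ℝ => Y ^ 2 * (1 - Y ^ 2) ^ α / (1 - x ^ 2 * d ^ 2 * Y ^ 2)) volume (-1) 1 := by
    apply ContinuousOn.intervalIntegrable
    rw [uIcc_of_le (by norm_num : (-1:ℝ) ≤ 1)]
    apply hcontf.continuousOn.div ((continuous_const.sub (continuous_const.mul
      (continuous_pow 2))).continuousOn)
    intro Y hY
    have hY2 : Y ^ 2 ≤ 1 := by nlinarith [hY.1, hY.2]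
    have : 1 - x ^ 2 * d ^ 2 ≤ 1 - x ^ 2 * d ^ 2 * Y ^ 2 := by nlinarith
    show 1 - x ^ 2 * d ^ 2 * Y ^ 2 ≠ 0
    linarith
  -- assemble
  have step1 : (∫ Y in (-1:ℝ)..1, Y ^ 2 * (1 - Y ^ 2) ^ α / (1 - x ^ 2 * d ^ 2 * Y ^ 2))
      ≤ ∫ Y in (-1:ℝ)..1, (1 / (1 - x ^ 2 * d ^ 2)) * (Y ^ 2 * (1 - Y ^ 2) ^ α) :=
    integral_mono_on (by norm_num) hintLHS (hint_f.const_mul _) hptwise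
  rw [intervalIntegral.integral_const_mul] at step1
  have h3p : (0:ℝ) < 3 * p + 1 := by linarith
  have hcα : 2 * α / (2 * α + 3) = 4 / (3 * p + 1) := by
    rw [div_eq_div_iff hc3.ne' h3p.ne', hαdef]
    field_simp
    ring
  have hconst : 1 / (1 - x ^ 2 * d ^ 2) * (2 * α / (2 * α + 3))
      = 4 / ((3 * p + 1) * (1 - x ^ 2 * d ^ 2)) := by
    rw [hcα, div_mul_div_comm, one_mul, mul_comm]
  calc (∫ Y in (-1:ℝ)..1, Y ^ 2 * (1 - Y ^ 2) ^ α / (1 - x ^ 2 * d ^ 2 * Y ^ 2))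
      ≤ 1 / (1 - x ^ 2 * d ^ 2) * ∫ Y in (-1:ℝ)..1, Y ^ 2 * (1 - Y ^ 2) ^ α := step1
    _ = 1 / (1 - x ^ 2 * d ^ 2) * (2 * α / (2 * α + 3)
          * ∫ Y in (-1:ℝ)..1, Y ^ 2 * (1 - Y ^ 2) ^ (α - 1)) := by rw [hkey]
    _ = (4 / ((3 * p + 1) * (1 - x ^ 2 * d ^ 2)))
          * ∫ Y in (-1:ℝ)..1, Y ^ 2 * (1 - Y ^ 2) ^ (α - 1) := by
        rw [← mul_assoc, hconst]
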